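/- Every code C of length 14 over an alphabet of size 3 (i.e., C ⊆ Q^{14} with |Q| = 3) whose minimum Hamming distance is at least 8 satisfies |C| ≤ 237. -/

import Mathlib

namespace Stmt17Aux

open Finset

/-- Four-dimensional rational feature vectors for the ternary simplex:
`⟨u i, u j⟩ = 1` if `i = j` and `-1/2` otherwise. -/
noncomputable def uvec : Fin 3 → Fin 4 → ℝ :=
  ![![1, 0, 0, 0], ![-1/2, 1/2, 1/2, 1/2], ![-1/2, -1/2, -1/2, -1/2]]

lemma uvec_dot (i j : Fin 3) :
    ∑ k : Fin 4, uvec i k * uvec j k = if i = j then 1 else -1/2 := by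
  fin_cases i <;> fin_cases j <;>
    simp [uvec, Fin.sum_univ_four] <;> norm_num

/-- Positive-semidefiniteness of a triple product of feature-map kernels. -/
lemma pos3 {X : Type*} (C : Finset X) (f1 f2 f3 : X → Fin 4 → ℝ) :
    0 ≤ ∑ x ∈ C, ∑ y ∈ C,
      (∑ k : Fin 4, f1 x k * f1 y k) *
        ((∑ k : Fin 4, f2 x k * f2 y k) * (∑ k : Fin 4, f3 x k * f3 y k)) := by
  set P : X → Fin 4 × Fin 4 × Fin 4 → ℝ :=
    fun x t => f1 x t.1 * f2 x t.2.1 * f3 x t.2.2 with hP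
  have key : ∀ x y : X,
      (∑ k : Fin 4, f1 x k * f1 y k) *
        ((∑ k : Fin 4, f2 x k * f2 y k) * (∑ k : Fin 4, f3 x k * f3 y k))
      = ∑ t : Fin 4 × Fin 4 × Fin 4, P x t * P y t := by
    intro x y
    simp only [hP, Fintype.sum_prod_type, Fin.sum_univ_four]
    ring
  calc (0:ℝ) ≤ ∑ t : Fin 4 × Fin 4 × Fin 4, (∑ x ∈ C, P x t) ^ 2 :=
        Finset.sum_nonneg fun t _ => sq_nonneg _
    _ = ∑ t : Fin 4 × Fin 4 × Fin 4, (∑ x ∈ C, P x t) * (∑ y ∈ C, P y t) := by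
        simp [sq]
    _ = ∑ t : Fin 4 × Fin 4 × Fin 4, ∑ x ∈ C, ∑ y ∈ C, P x t * P y t := by
        refine Finset.sum_congr rfl fun t _ => ?_
        rw [Finset.sum_mul_sum]
    _ = ∑ x ∈ C, ∑ t : Fin 4 × Fin 4 × Fin 4, ∑ y ∈ C, P x t * P y t :=
        Finset.sum_comm
    _ = ∑ x ∈ C, ∑ y ∈ C, ∑ t : Fin 4 × Fin 4 × Fin 4, P x t * P y t := by
        refine Finset.sum_congr rfl fun x _ => Finset.sum_comm
    _ = ∑ x ∈ C, ∑ y ∈ C,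
        (∑ k : Fin 4, f1 x k * f1 y k) *
          ((∑ k : Fin 4, f2 x k * f2 y k) * (∑ k : Fin 4, f3 x k * f3 y k)) := by
        refine Finset.sum_congr rfl fun x _ => Finset.sum_congr rfl fun y _ => ?_
        rw [key]

/-- Swap a parameter sum out of a double code sum. -/
lemma swap_sum {X ι : Type*} (C : Finset X) (s : Finset ι) (A : ι → X → X → ℝ) :
    ∑ x ∈ C, ∑ y ∈ C, ∑ i ∈ s, A i x y = ∑ i ∈ s, ∑ x ∈ C, ∑ y ∈ C, A i x y := by
  calc ∑ x ∈ C, ∑ y ∈ C, ∑ i ∈ s, A i x y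
      = ∑ x ∈ C, ∑ i ∈ s, ∑ y ∈ C, A i x y := by
        refine Finset.sum_congr rfl fun x _ => Finset.sum_comm
    _ = ∑ i ∈ s, ∑ x ∈ C, ∑ y ∈ C, A i x y := Finset.sum_comm

/-- Arity-one version of `pos3`. -/
lemma pos1 {X : Type*} (C : Finset X) (f1 : X → Fin 4 → ℝ) :
    0 ≤ ∑ x ∈ C, ∑ y ∈ C, ∑ k : Fin 4, f1 x k * f1 y k := by
  have hs : ∑ x ∈ C, ∑ y ∈ C, ∑ k : Fin 4, f1 x k * f1 y k
      = ∑ k : Fin 4, ∑ x ∈ C, ∑ y ∈ C, f1 x k * f1 y k := by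
    calc ∑ x ∈ C, ∑ y ∈ C, ∑ k : Fin 4, f1 x k * f1 y k
        = ∑ x ∈ C, ∑ k : Fin 4, ∑ y ∈ C, f1 x k * f1 y k := by
          exact Finset.sum_congr rfl fun x _ => Finset.sum_comm
      _ = ∑ k : Fin 4, ∑ x ∈ C, ∑ y ∈ C, f1 x k * f1 y k := Finset.sum_comm
  rw [hs]
  refine Finset.sum_nonneg fun k _ => ?_
  rw [show ∑ x ∈ C, ∑ y ∈ C, f1 x k * f1 y k
      = (∑ x ∈ C, f1 x k) * (∑ y ∈ C, f1 y k) from (Finset.sum_mul_sum _ _ _ _).symm]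
  exact mul_self_nonneg _

/-- Arity-two version of `pos3`. -/
lemma pos2 {X : Type*} (C : Finset X) (f1 f2 : X → Fin 4 → ℝ) :
    0 ≤ ∑ x ∈ C, ∑ y ∈ C,
      (∑ k : Fin 4, f1 x k * f1 y k) * (∑ k : Fin 4, f2 x k * f2 y k) := by
  set P : X → Fin 4 × Fin 4 → ℝ := fun x t => f1 x t.1 * f2 x t.2 with hP
  have key : ∀ x y : X,
      (∑ k : Fin 4, f1 x k * f1 y k) * (∑ k : Fin 4, f2 x k * f2 y k)
      = ∑ t : Fin 4 × Fin 4, P x t * P y t := by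
    intro x y
    simp only [hP, Fintype.sum_prod_type, Fin.sum_univ_four]
    ring
  calc (0:ℝ) ≤ ∑ t : Fin 4 × Fin 4, (∑ x ∈ C, P x t) ^ 2 :=
        Finset.sum_nonneg fun t _ => sq_nonneg _
    _ = ∑ t : Fin 4 × Fin 4, (∑ x ∈ C, P x t) * (∑ y ∈ C, P y t) := by
        simp [sq]
    _ = ∑ t : Fin 4 × Fin 4, ∑ x ∈ C, ∑ y ∈ C, P x t * P y t := by
        refine Finset.sum_congr rfl fun t _ => ?_
        rw [Finset.sum_mul_sum]
    _ = ∑ x ∈ C, ∑ t : Fin 4 × Fin 4, ∑ y ∈ C, P x t * P y t :=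
        Finset.sum_comm
    _ = ∑ x ∈ C, ∑ y ∈ C, ∑ t : Fin 4 × Fin 4, P x t * P y t := by
        refine Finset.sum_congr rfl fun x _ => Finset.sum_comm
    _ = ∑ x ∈ C, ∑ y ∈ C,
        (∑ k : Fin 4, f1 x k * f1 y k) * (∑ k : Fin 4, f2 x k * f2 y k) := by
        refine Finset.sum_congr rfl fun x _ => Finset.sum_congr rfl fun y _ => ?_
        rw [key]

end Stmt17Aux

/-- `A₃(14, −1/7) ≤ 237`: every ternary code of length 14 with minimum Hamming
distance at least 8 has at most 237 codewords. -/
theorem stmt17 (Q : Type*) [Fintype Q] [DecidableEq Q] (hQ : Fintype.card Q = 3)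
    (C : Finset (Fin 14 → Q))
    (hC : ∀ x ∈ C, ∀ y ∈ C, x ≠ y → 8 ≤ hammingDist x y) :
    C.card ≤ 237 := by
  classical
  open Finset Stmt17Aux in
  obtain ⟨e⟩ : Nonempty (Q ≃ Fin 3) := ⟨Fintype.equivFinOfCardEq hQ⟩
  -- feature map and per-letter kernel
  set v : Q → Fin 4 → ℝ := fun a => uvec (e a) with hv
  set g : Q → Q → ℝ := fun a b => ∑ k : Fin 4, v a k * v b k with hg
  have gval : ∀ a b : Q, g a b = if a = b then 1 else -1/2 := by
    intro a b
    have h1 : g a b = if e a = e b then (1:ℝ) else -1/2 := uvec_dot (e a) (e b)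
    rw [h1]
    by_cases h : a = b
    · simp [h]
    · simp [h, EmbeddingLike.apply_eq_iff_eq]
  -- the two power sums
  set P1 : (Fin 14 → Q) → (Fin 14 → Q) → ℝ :=
    fun x y => ∑ i : Fin 14, g (x i) (y i) with hP1
  set P2 : (Fin 14 → Q) → (Fin 14 → Q) → ℝ :=
    fun x y => ∑ i : Fin 14, g (x i) (y i) * g (x i) (y i) with hP2
  -- evaluation of P1 and P2 through the Hamming distance
  have cardsplit : ∀ x y : Fin 14 → Q,
      #{i : Fin 14 | x i = y i} = 14 - hammingDist x y ∧ hammingDist x y ≤ 14 := by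
    intro x y
    have h := Finset.card_filter_add_card_filter_not
      (s := (univ : Finset (Fin 14))) (p := fun i => x i = y i)
    have hd : hammingDist x y = #{i : Fin 14 | ¬ x i = y i} := rfl
    simp only [Finset.card_univ, Fintype.card_fin] at h
    omega
  have evalsum : ∀ (x y : Fin 14 → Q) (c₁ c₂ : ℝ),
      ∑ i : Fin 14, (if x i = y i then c₁ else c₂)
        = (14 - (hammingDist x y : ℝ)) * c₁ + (hammingDist x y : ℝ) * c₂ := by
    intro x y c₁ c₂
    rw [Finset.sum_ite, Finset.sum_const, Finset.sum_const]
    obtain ⟨h1, h2⟩ := cardsplit x y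
    have hd : #{i : Fin 14 | ¬ x i = y i} = hammingDist x y := rfl
    rw [h1, hd]
    have : ((14 - hammingDist x y : ℕ) : ℝ) = 14 - (hammingDist x y : ℝ) := by
      push_cast [Nat.cast_sub h2]
      ring
    simp [nsmul_eq_mul, this]
  have hP1val : ∀ x y : Fin 14 → Q,
      P1 x y = 14 - 3/2 * (hammingDist x y : ℝ) := by
    intro x y
    have : P1 x y = ∑ i : Fin 14, (if x i = y i then (1:ℝ) else -1/2) := by
      rw [hP1]; exact Finset.sum_congr rfl fun i _ => gval _ _
    rw [this, evalsum]; ring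
  have hP2val : ∀ x y : Fin 14 → Q,
      P2 x y = 14 - 3/4 * (hammingDist x y : ℝ) := by
    intro x y
    have : P2 x y = ∑ i : Fin 14, (if x i = y i then (1:ℝ) else 1/4) := by
      rw [hP2]
      refine Finset.sum_congr rfl fun i _ => ?_
      rw [gval]
      by_cases h : x i = y i <;> simp [h] <;> norm_num
    rw [this, evalsum]; ring
  -- off-diagonal representation of P1^2 - P2
  have hEoff : ∀ x y : Fin 14 → Q,
      P1 x y ^ 2 - P2 x y
        = ∑ p ∈ (univ : Finset (Fin 14)).offDiag,
            g (x p.1) (y p.1) * g (x p.2) (y p.2) := by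
    intro x y
    have hsq : P1 x y ^ 2
        = ∑ p ∈ (univ : Finset (Fin 14)) ×ˢ (univ : Finset (Fin 14)),
            g (x p.1) (y p.1) * g (x p.2) (y p.2) := by
      rw [sq, hP1, Finset.sum_mul_sum]
      rw [Finset.sum_product]
    rw [hsq, ← Finset.diag_union_offDiag (univ : Finset (Fin 14)),
      Finset.sum_union (Finset.disjoint_diag_offDiag _), Finset.sum_diag]
    rw [hP2]
    ring
  -- positivity of the three kernels
  have posP1 : 0 ≤ ∑ x ∈ C, ∑ y ∈ C, P1 x y := by
    have hs := swap_sum C (univ : Finset (Fin 14)) (fun i x y => g (x i) (y i))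
    simp only [hP1]
    rw [hs]
    refine Finset.sum_nonneg fun i _ => ?_
    have h := pos1 C (fun x => v (x i))
    simpa [hg] using h
  have posE : 0 ≤ ∑ x ∈ C, ∑ y ∈ C, (P1 x y ^ 2 - P2 x y) := by
    have hs := swap_sum C ((univ : Finset (Fin 14)).offDiag)
      (fun p x y => g (x p.1) (y p.1) * g (x p.2) (y p.2))
    calc (0:ℝ) ≤ ∑ p ∈ (univ : Finset (Fin 14)).offDiag, ∑ x ∈ C, ∑ y ∈ C,
          g (x p.1) (y p.1) * g (x p.2) (y p.2) := by
          refine Finset.sum_nonneg fun p _ => ?_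
          have h := pos2 C (fun x => v (x p.1)) (fun x => v (x p.2))
          simpa [hg] using h
      _ = ∑ x ∈ C, ∑ y ∈ C, ∑ p ∈ (univ : Finset (Fin 14)).offDiag,
            g (x p.1) (y p.1) * g (x p.2) (y p.2) := hs.symm
      _ = ∑ x ∈ C, ∑ y ∈ C, (P1 x y ^ 2 - P2 x y) := by
          exact Finset.sum_congr rfl fun x _ =>
            Finset.sum_congr rfl fun y _ => (hEoff x y).symm
  have posPE : 0 ≤ ∑ x ∈ C, ∑ y ∈ C, P1 x y * (P1 x y ^ 2 - P2 x y) := by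
    have hrep : ∀ x y : Fin 14 → Q,
        P1 x y * (P1 x y ^ 2 - P2 x y)
          = ∑ q ∈ (univ : Finset (Fin 14)) ×ˢ (univ : Finset (Fin 14)).offDiag,
              g (x q.1) (y q.1) * (g (x q.2.1) (y q.2.1) * g (x q.2.2) (y q.2.2)) := by
      intro x y
      rw [hEoff, hP1, Finset.sum_mul_sum, Finset.sum_product]
    have hs := swap_sum C ((univ : Finset (Fin 14)) ×ˢ (univ : Finset (Fin 14)).offDiag)
      (fun q x y => g (x q.1) (y q.1) * (g (x q.2.1) (y q.2.1) * g (x q.2.2) (y q.2.2)))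
    calc (0:ℝ) ≤ ∑ q ∈ (univ : Finset (Fin 14)) ×ˢ (univ : Finset (Fin 14)).offDiag,
          ∑ x ∈ C, ∑ y ∈ C,
            g (x q.1) (y q.1) * (g (x q.2.1) (y q.2.1) * g (x q.2.2) (y q.2.2)) := by
          refine Finset.sum_nonneg fun q _ => ?_
          have h := pos3 C (fun x => v (x q.1)) (fun x => v (x q.2.1)) (fun x => v (x q.2.2))
          simpa [hg] using h
      _ = ∑ x ∈ C, ∑ y ∈ C, ∑ q ∈ (univ : Finset (Fin 14)) ×ˢ (univ : Finset (Fin 14)).offDiag,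
            g (x q.1) (y q.1) * (g (x q.2.1) (y q.2.1) * g (x q.2.2) (y q.2.2)) := hs.symm
      _ = ∑ x ∈ C, ∑ y ∈ C, P1 x y * (P1 x y ^ 2 - P2 x y) := by
          exact Finset.sum_congr rfl fun x _ =>
            Finset.sum_congr rfl fun y _ => (hrep x y).symm
  -- the LP certificate
  set T : (Fin 14 → Q) → (Fin 14 → Q) → ℝ :=
    fun x y => 1 + 13/30 * P1 x y + 1/3 * (P1 x y ^ 2 - P2 x y)
      + 1/15 * (P1 x y * (P1 x y ^ 2 - P2 x y)) with hT
  set N : ℝ := (C.card : ℝ) with hN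
  -- lower bound: N^2 ≤ ∑∑ T
  have lower : N ^ 2 ≤ ∑ x ∈ C, ∑ y ∈ C, T x y := by
    have hsum : ∑ x ∈ C, ∑ y ∈ C, T x y
        = (∑ x ∈ C, ∑ y ∈ C, (1:ℝ))
          + 13/30 * (∑ x ∈ C, ∑ y ∈ C, P1 x y)
          + 1/3 * (∑ x ∈ C, ∑ y ∈ C, (P1 x y ^ 2 - P2 x y))
          + 1/15 * (∑ x ∈ C, ∑ y ∈ C, P1 x y * (P1 x y ^ 2 - P2 x y)) := by
      simp only [hT, Finset.sum_add_distrib, Finset.mul_sum]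
    have hones : (∑ x ∈ C, ∑ y ∈ C, (1:ℝ)) = N ^ 2 := by
      simp [hN, sq]
    rw [hsum, hones]
    nlinarith [posP1, posE, posPE]
  -- upper bound: ∑∑ T ≤ N * (1188/5)
  have Tdiag : ∀ x : Fin 14 → Q, T x x = 1188/5 := by
    intro x
    have h0 : hammingDist x x = 0 := hammingDist_self x
    have h1 : P1 x x = 14 := by rw [hP1val, h0]; norm_num
    have h2 : P2 x x = 14 := by rw [hP2val, h0]; norm_num
    rw [hT]; dsimp only; rw [h1, h2]; norm_num
  have Toff : ∀ x ∈ C, ∀ y ∈ C, x ≠ y → T x y ≤ 0 := by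
    intro x hx y hy hxy
    have hd8 : 8 ≤ hammingDist x y := hC x hx y hy hxy
    have hd14 : hammingDist x y ≤ 14 := (cardsplit x y).2
    rw [hT]; dsimp only; rw [hP1val, hP2val]
    set d := hammingDist x y with hdd
    interval_cases d <;> norm_num
  have upper : ∑ x ∈ C, ∑ y ∈ C, T x y ≤ N * (1188/5) := by
    have hrow : ∀ x ∈ C, ∑ y ∈ C, T x y ≤ 1188/5 := by
      intro x hx
      have hsplit : ∑ y ∈ C, T x y = T x x + ∑ y ∈ C.erase x, T x y := by
        rw [Finset.add_sum_erase C (fun y => T x y) hx]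
      rw [hsplit, Tdiag]
      have : ∑ y ∈ C.erase x, T x y ≤ 0 := by
        refine Finset.sum_nonpos fun y hy => ?_
        have hyC : y ∈ C := Finset.mem_of_mem_erase hy
        have hne : x ≠ y := fun h => (Finset.ne_of_mem_erase hy) h.symm
        exact Toff x hx y hyC hne
      linarith
    calc ∑ x ∈ C, ∑ y ∈ C, T x y ≤ ∑ x ∈ C, (1188/5 : ℝ) :=
          Finset.sum_le_sum hrow
      _ = N * (1188/5) := by rw [Finset.sum_const, hN]; simp [nsmul_eq_mul]
  -- conclude
  have key : N ^ 2 ≤ N * (1188/5) := le_trans lower upper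
  by_contra hcon
  push_neg at hcon
  have h238 : (238 : ℝ) ≤ N := by
    rw [hN]; exact_mod_cast hcon
  nlinarith [key, h238]
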